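/- Let D ≥ 1, let y be any D×D complex matrix, and let λ ∈ ℂ with λ ≠ 0. Then the 2D×2D block matrix Y = fromBlocks y (λ•1) 0 y is not diagonalizable: there do not exist an invertible 2D×2D complex matrix P and a function d : Fin D ⊕ Fin D → ℂ such that Y = P * Matrix.diagonal d * P⁻¹. -/

import Mathlib

open Matrix Polynomial

/-- Conjugation by a unit as an algebra hom. -/
private noncomputable def conjAlgHom {n : Type*} [Fintype n] [DecidableEq n]
    (u : (Matrix n n ℂ)ˣ) : Matrix n n ℂ →ₐ[ℂ] Matrix n n ℂ where
  toFun x := ↑u * x * ↑(u⁻¹)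
  map_one' := by
    show (↑u : Matrix n n ℂ) * 1 * (↑(u⁻¹) : Matrix n n ℂ) = 1
    rw [mul_one]; exact u.mul_inv
  map_mul' x y := by
    simp only [mul_assoc, Units.inv_mul_cancel_left]
  map_zero' := by simp
  map_add' x y := by noncomm_ring
  commutes' r := by
    simp only [Algebra.algebraMap_eq_smul_one, Matrix.smul_mul, Matrix.mul_smul, one_mul,
      mul_one]
    rw [u.mul_inv]

private lemma aeval_fromBlocks {D : ℕ} (y : Matrix (Fin D) (Fin D) ℂ) (lam : ℂ)
    (p : ℂ[X]) :
    aeval (fromBlocks y (lam • (1 : Matrix (Fin D) (Fin D) ℂ)) 0 y) p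
      = fromBlocks (aeval y p) (lam • aeval y (derivative p)) 0 (aeval y p) := by
  -- key step: multiplication by X
  have step : ∀ p : ℂ[X],
      aeval (fromBlocks y (lam • (1 : Matrix (Fin D) (Fin D) ℂ)) 0 y) p
        = fromBlocks (aeval y p) (lam • aeval y (derivative p)) 0 (aeval y p) →
      aeval (fromBlocks y (lam • (1 : Matrix (Fin D) (Fin D) ℂ)) 0 y) (p * X) =
        fromBlocks (aeval y (p * X)) (lam • aeval y (derivative (p * X))) 0
          (aeval y (p * X)) := by
    intro p hp
    rw [_root_.map_mul, hp, aeval_X, Matrix.fromBlocks_multiply]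
    simp only [derivative_mul, derivative_X, mul_one, _root_.map_mul, map_add, aeval_X]
    rw [Matrix.fromBlocks_inj]
    refine ⟨by simp, ?_, by simp, by simp⟩
    simp [Matrix.mul_smul, Matrix.smul_mul, smul_add, add_comm]
  induction p using Polynomial.induction_on with
  | C a =>
      simp [aeval_C, Algebra.algebraMap_eq_smul_one, ← Matrix.fromBlocks_one,
        Matrix.fromBlocks_smul]
  | add p q hp hq =>
      simp only [map_add, derivative_add, smul_add, hp, hq, Matrix.fromBlocks_add, add_zero]
  | monomial n a ih =>
      have := step (C a * X ^ n) ih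
      rwa [mul_assoc, ← pow_succ] at this

/-- The doubled matryoshka hypercharge matrix `fromBlocks y (λ•1) 0 y` with `λ ≠ 0` cannot
be diagonalized, because of its block Jordan structure (Section 4). -/
theorem doubled_hypercharge_not_diagonalizable (D : ℕ) (hD : 1 ≤ D)
    (y : Matrix (Fin D) (Fin D) ℂ) (lam : ℂ) (hlam : lam ≠ 0) :
    ¬ ∃ (P : Matrix (Fin D ⊕ Fin D) (Fin D ⊕ Fin D) ℂ) (d : Fin D ⊕ Fin D → ℂ),
        IsUnit P ∧
          fromBlocks y (lam • (1 : Matrix (Fin D) (Fin D) ℂ)) 0 y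
            = P * Matrix.diagonal d * P⁻¹ := by
  rintro ⟨P, d, hP, hYeq⟩
  set s : Finset ℂ := Finset.image d Finset.univ with hs
  set q : ℂ[X] := ∏ c ∈ s, (X - C c) with hq
  -- q is separable
  have hsep : q.Separable := by
    rw [hq]
    exact Polynomial.separable_prod_X_sub_C_iff'.2 (fun i _ j _ h => h)
  -- q annihilates the diagonal matrix
  have hdiag : aeval (Matrix.diagonal d) q = 0 := by
    have h1 : Matrix.diagonal d = Matrix.diagonalAlgHom ℂ d := rfl
    rw [h1, aeval_algHom_apply]
    suffices h : (aeval d q : (Fin D ⊕ Fin D) → ℂ) = 0 by rw [h, map_zero]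
    funext i
    have h2 : (aeval d q : (Fin D ⊕ Fin D) → ℂ) i = aeval (d i) q :=
      (aeval_algHom_apply (Pi.evalAlgHom ℂ (fun _ => ℂ) i) d q).symm
    rw [Pi.zero_apply, h2, hq, map_prod]
    refine Finset.prod_eq_zero (Finset.mem_image_of_mem d (Finset.mem_univ i)) ?_
    simp
  -- q annihilates Y
  obtain ⟨u, rfl⟩ := hP
  have hYconj : fromBlocks y (lam • (1 : Matrix (Fin D) (Fin D) ℂ)) 0 y
      = conjAlgHom u (Matrix.diagonal d) := by
    rw [hYeq, ← Matrix.coe_units_inv]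
    rfl
  have hY0 : aeval (fromBlocks y (lam • (1 : Matrix (Fin D) (Fin D) ℂ)) 0 y) q = 0 := by
    rw [hYconj, aeval_algHom_apply, hdiag, map_zero]
  rw [aeval_fromBlocks] at hY0
  have hqy : aeval y q = 0 := by
    ext i j
    have := congrFun (congrFun hY0 (Sum.inl i)) (Sum.inl j)
    simpa [fromBlocks] using this
  have hq'y : aeval y (derivative q) = 0 := by
    ext i j
    have := congrFun (congrFun hY0 (Sum.inl i)) (Sum.inr j)
    simp only [fromBlocks, Matrix.of_apply, Sum.elim_inl, Sum.elim_inr,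
      Matrix.smul_apply, Matrix.zero_apply, smul_eq_mul] at this
    rcases mul_eq_zero.1 this with h | h
    · exact absurd h hlam
    · simpa using h
  -- separability gives 1 = 0
  obtain ⟨a, b, hab⟩ := hsep
  have h1 : (1 : Matrix (Fin D) (Fin D) ℂ) = 0 := by
    have := congrArg (aeval y) hab
    simpa [hqy, hq'y] using this.symm
  have : (1 : Matrix (Fin D) (Fin D) ℂ) ⟨0, hD⟩ ⟨0, hD⟩ = 0 := by rw [h1]; rfl
  simp [Matrix.one_apply] at this
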